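/- (Soundness and completeness of K45m) For every set Γ of modal formulas and every modal formula α: Γ ⊢_K45m α if and only if Γ ⊨_{M_K45m} α, where M_K45m is the eight-valued Nmatrix obtained from M_Km by replacing the multioperator for □. -/

import Mathlib

/- ## Syntax of the modal language -/

inductive Form : Type
  | var : Nat → Form
  | neg : Form → Form
  | imp : Form → Form → Form
  | box : Form → Form
  deriving DecidableEq

namespace Form
/-- ◇α := ¬□¬α -/
def dia (α : Form) : Form := neg (box (neg α))
/-- α∨β := ¬α→β -/
def disj (α β : Form) : Form := imp (neg α) β
/-- α∧β := ¬(α→¬β) -/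
def conj (α β : Form) : Form := neg (imp α (neg β))
end Form

open Form

/-- Substitution instances of classical tautologies over {¬,→}: formulas true under
every Boolean assignment that respects negation and implication. -/
def Taut (φ : Form) : Prop :=
  ∀ v : Form → Bool,
    (∀ α, v (Form.neg α) = !(v α)) →
    (∀ α β, v (Form.imp α β) = (!(v α) || v β)) →
    v φ = true

/-- Hilbert-style derivations from a set of premises, with Modus Ponens as the only
inference rule, given a set `Ax` of axioms. -/
inductive Deriv (Ax : Form → Prop) (Γ : Set Form) : Form → Prop
  | prem {φ : Form} : φ ∈ Γ → Deriv Ax Γ φ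
  | ax {φ : Form} : Ax φ → Deriv Ax Γ φ
  | mp {φ ψ : Form} : Deriv Ax Γ (Form.imp φ ψ) → Deriv Ax Γ φ → Deriv Ax Γ ψ

/- ## Axiom schemas -/

def axK (α β : Form) : Form := (box (α.imp β)).imp ((box α).imp (box β))
def axK1 (α β : Form) : Form := (box (α.imp β)).imp ((dia α).imp (dia β))
def axK2 (α β : Form) : Form := (dia (α.imp β)).imp ((box α).imp (dia β))
def axM1 (α β : Form) : Form := (Form.neg (dia α)).imp (box (α.imp β))
def axM2 (α β : Form) : Form := (box β).imp (box (α.imp β))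
def axM3 (α β : Form) : Form := (dia β).imp (dia (α.imp β))
def axM4 (α β : Form) : Form := (dia (Form.neg α)).imp (dia (α.imp β))
def axT (α : Form) : Form := (box α).imp α
def axD (α : Form) : Form := (box α).imp (dia α)
def axDN1 (α : Form) : Form := (box α).imp (box (Form.neg (Form.neg α)))
def axDN2 (α : Form) : Form := (box (Form.neg (Form.neg α))).imp (box α)
def ax4 (α : Form) : Form := (box α).imp (box (box α))
def ax5 (α : Form) : Form := (dia (box α)).imp (box α)
def axKdet (α β : Form) : Form := (box (α.imp β)).imp ((dia α).imp (box β))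

def axK' (α β : Form) : Form := (dia α).imp (axK α β)
def axK1' (α β : Form) : Form := (dia (Form.neg β)).imp (axK1 α β)
def axK2' (α β : Form) : Form := (dia α).imp (axK2 α β)
def axM3' (α β : Form) : Form := ((dia α).disj (dia (Form.neg α))).imp (axM3 α β)
def axM4' (α β : Form) : Form := (dia (Form.neg β)).imp (axM4 α β)
def axI1 (α β : Form) : Form :=
  ((box α).conj (box (Form.neg α))).imp ((box (α.imp β)).conj (box (Form.neg (α.imp β))))
def axI2 (α β : Form) : Form :=
  ((box β).conj (box (Form.neg β))).imp ((box (α.imp β)).conj (box (Form.neg (α.imp β))))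

/-- The recovery operator ∘α := □α→◇α. -/
def circm (α : Form) : Form := (box α).imp (dia α)
/-- •α := ¬∘α. -/
def bulm (α : Form) : Form := Form.neg (circm α)
/-- The recovery operator ∘'α := (□α→α)∧(□¬α→¬α). -/
def circm' (α : Form) : Form :=
  ((box α).imp α).conj ((box (Form.neg α)).imp (Form.neg α))

/- ## Hilbert calculi -/

/-- The system Km. -/
inductive KmAx : Form → Prop
  | pc {φ : Form} : Taut φ → KmAx φ
  | k' (α β : Form) : KmAx (axK' α β)
  | k1' (α β : Form) : KmAx (axK1' α β)
  | k2' (α β : Form) : KmAx (axK2' α β)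
  | m1 (α β : Form) : KmAx (axM1 α β)
  | m2 (α β : Form) : KmAx (axM2 α β)
  | m3' (α β : Form) : KmAx (axM3' α β)
  | m4' (α β : Form) : KmAx (axM4' α β)
  | i1 (α β : Form) : KmAx (axI1 α β)
  | i2 (α β : Form) : KmAx (axI2 α β)
  | dn1 (α : Form) : KmAx (axDN1 α)
  | dn2 (α : Form) : KmAx (axDN2 α)

/-- The system K4m = Km + (4). -/
inductive K4mAx : Form → Prop
  | km {φ : Form} : KmAx φ → K4mAx φ
  | four (α : Form) : K4mAx (ax4 α)

/-- The system K45m = Km + (4) + (5). -/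
inductive K45mAx : Form → Prop
  | km {φ : Form} : KmAx φ → K45mAx φ
  | four (α : Form) : K45mAx (ax4 α)
  | five (α : Form) : K45mAx (ax5 α)

/-- The system Dm. -/
inductive DmAx : Form → Prop
  | pc {φ : Form} : Taut φ → DmAx φ
  | k (α β : Form) : DmAx (axK α β)
  | k1 (α β : Form) : DmAx (axK1 α β)
  | k2 (α β : Form) : DmAx (axK2 α β)
  | m1 (α β : Form) : DmAx (axM1 α β)
  | m2 (α β : Form) : DmAx (axM2 α β)
  | m3 (α β : Form) : DmAx (axM3 α β)
  | m4 (α β : Form) : DmAx (axM4 α β)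
  | d (α : Form) : DmAx (axD α)
  | dn1 (α : Form) : DmAx (axDN1 α)
  | dn2 (α : Form) : DmAx (axDN2 α)

/-- The system Tm. -/
inductive TmAx : Form → Prop
  | pc {φ : Form} : Taut φ → TmAx φ
  | k (α β : Form) : TmAx (axK α β)
  | k1 (α β : Form) : TmAx (axK1 α β)
  | k2 (α β : Form) : TmAx (axK2 α β)
  | m1 (α β : Form) : TmAx (axM1 α β)
  | m2 (α β : Form) : TmAx (axM2 α β)
  | m3 (α β : Form) : TmAx (axM3 α β)
  | m4 (α β : Form) : TmAx (axM4 α β)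
  | t (α : Form) : TmAx (axT α)
  | dn1 (α : Form) : TmAx (axDN1 α)
  | dn2 (α : Form) : TmAx (axDN2 α)

/-- The system T45m = Tm + (4) + (5). -/
inductive T45mAx : Form → Prop
  | tm {φ : Form} : TmAx φ → T45mAx φ
  | four (α : Form) : T45mAx (ax4 α)
  | five (α : Form) : T45mAx (ax5 α)

/-- The system Tmd: Tm with (K1) replaced by (Kdet). -/
inductive TmdAx : Form → Prop
  | pc {φ : Form} : Taut φ → TmdAx φ
  | k (α β : Form) : TmdAx (axK α β)
  | kdet (α β : Form) : TmdAx (axKdet α β)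
  | k2 (α β : Form) : TmdAx (axK2 α β)
  | m1 (α β : Form) : TmdAx (axM1 α β)
  | m2 (α β : Form) : TmdAx (axM2 α β)
  | m3 (α β : Form) : TmdAx (axM3 α β)
  | m4 (α β : Form) : TmdAx (axM4 α β)
  | t (α : Form) : TmdAx (axT α)
  | dn1 (α : Form) : TmdAx (axDN1 α)
  | dn2 (α : Form) : TmdAx (axDN2 α)

/-- The system Tm4d = Tmd + (4). -/
inductive Tm4dAx : Form → Prop
  | tmd {φ : Form} : TmdAx φ → Tm4dAx φ
  | four (α : Form) : Tm4dAx (ax4 α)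

/-- The system Tm + (Kdet). -/
inductive TmKdetAx : Form → Prop
  | tm {φ : Form} : TmAx φ → TmKdetAx φ
  | kdet (α β : Form) : TmKdetAx (axKdet α β)

/-- The system Km∘. -/
inductive KmCircAx : Form → Prop
  | pc {φ : Form} : Taut φ → KmCircAx φ
  | k'' (α β : Form) : KmCircAx ((circm α).imp (axK α β))
  | k1'' (α β : Form) : KmCircAx ((circm β).imp (axK1 α β))
  | k2'' (α β : Form) : KmCircAx ((circm α).imp (axK2 α β))
  | m1 (α β : Form) : KmCircAx (axM1 α β)
  | m2 (α β : Form) : KmCircAx (axM2 α β)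
  | m3'' (α β : Form) : KmCircAx ((circm α).imp (axM3 α β))
  | m4'' (α β : Form) : KmCircAx ((circm β).imp (axM4 α β))
  | i1' (α β : Form) : KmCircAx ((bulm α).imp (bulm (α.imp β)))
  | i2' (α β : Form) : KmCircAx ((bulm β).imp (bulm (α.imp β)))
  | dn1 (α : Form) : KmCircAx (axDN1 α)
  | dn2 (α : Form) : KmCircAx (axDN2 α)

/- ## The eight-valued non-deterministic semantics -/

/-- The modal "letters" T, C, F, I. -/
inductive Ltr : Type
  | T | C | F | I
  deriving DecidableEq

/-- An eight-valued truth-value: a letter together with a sign (`true` = +). -/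
structure V8 where
  ltr : Ltr
  sgn : Bool
  deriving DecidableEq

/-- Designated values: those with sign +. -/
def V8.desig (x : V8) : Prop := x.sgn = true

/-- Letter of the negation. -/
def lneg : Ltr → Ltr
  | .T => .F
  | .C => .C
  | .F => .T
  | .I => .I

/-- The (deterministic) multioperator for ¬. -/
def neg8 (x : V8) : Set V8 := {⟨lneg x.ltr, !x.sgn⟩}

/-- Set of possible letters of an implication, given the letters of the components. -/
def limp : Ltr → Ltr → Set Ltr
  | .I, _ => {Ltr.I}
  | .T, .I => {Ltr.I}
  | .C, .I => {Ltr.I}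
  | .F, .I => {Ltr.I}
  | .T, .T => {Ltr.T}
  | .T, .C => {Ltr.C}
  | .T, .F => {Ltr.F}
  | .C, .T => {Ltr.T}
  | .C, .C => {Ltr.T, Ltr.C}
  | .C, .F => {Ltr.C}
  | .F, .T => {Ltr.T}
  | .F, .C => {Ltr.T}
  | .F, .F => {Ltr.T}

/-- The multioperator for →: sign is material implication of the signs, letter as in `limp`. -/
def imp8 (x y : V8) : Set V8 :=
  { z | z.ltr ∈ limp x.ltr y.ltr ∧ z.sgn = (!x.sgn || y.sgn) }

/-- The multioperator for □ in (the Nmatrix for) Km. -/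
def box8Km (x : V8) : Set V8 :=
  if x.ltr = Ltr.T ∨ x.ltr = Ltr.I then { z | z.sgn = true } else { z | z.sgn = false }

/-- The multioperator for □ in the Nmatrix for K4m. -/
def box8K4m (x : V8) : Set V8 :=
  if x.ltr = Ltr.T ∨ x.ltr = Ltr.I then ({⟨Ltr.T, true⟩, ⟨Ltr.I, true⟩} : Set V8)
  else { z | z.sgn = false }

/-- The multioperator for □ in the Nmatrix for K45m. -/
def box8K45m (x : V8) : Set V8 :=
  if x.ltr = Ltr.T ∨ x.ltr = Ltr.I then ({⟨Ltr.T, true⟩, ⟨Ltr.I, true⟩} : Set V8)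
  else ({⟨Ltr.F, false⟩, ⟨Ltr.I, false⟩} : Set V8)

/-- A valuation over the eight-valued Nmatrix with the given □-multioperator. -/
def IsVal8 (boxOp : V8 → Set V8) (v : Form → V8) : Prop :=
  (∀ α, v (Form.neg α) ∈ neg8 (v α)) ∧
  (∀ α β, v (Form.imp α β) ∈ imp8 (v α) (v β)) ∧
  (∀ α, v (Form.box α) ∈ boxOp (v α))

/-- Semantic consequence over the eight-valued Nmatrix with the given □-multioperator. -/
def NmEntails (boxOp : V8 → Set V8) (Γ : Set Form) (φ : Form) : Prop :=
  ∀ v : Form → V8, IsVal8 boxOp v → (∀ γ ∈ Γ, (v γ).desig) → (v φ).desig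

/- ## Multialgebras -/

/-- A multialgebra over {¬,→,□}, presented on the carrier `V8` with a chosen domain. -/
structure MAlg where
  dom : Set V8
  negOp : V8 → Set V8
  impOp : V8 → V8 → Set V8
  boxOp : V8 → Set V8

/-- `A` is a submultialgebra of `B`. -/
def SubMAlg (A B : MAlg) : Prop :=
  A.dom ⊆ B.dom ∧
  (∀ x ∈ A.dom, A.negOp x ⊆ B.negOp x) ∧
  (∀ x ∈ A.dom, ∀ y ∈ A.dom, A.impOp x y ⊆ B.impOp x y) ∧
  (∀ x ∈ A.dom, A.boxOp x ⊆ B.boxOp x)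

/-- Domain of the Nmatrix for Dm: the six non-I values. -/
def domDm : Set V8 := { x | x.ltr ≠ Ltr.I }

/-- Domain of the Nmatrix for Tm: {T+, C+, C−, F−}. -/
def domTm : Set V8 :=
  ({⟨Ltr.T, true⟩, ⟨Ltr.C, true⟩, ⟨Ltr.C, false⟩, ⟨Ltr.F, false⟩} : Set V8)

/-- The multialgebra underlying the Nmatrix for Km. -/
def A_Km : MAlg := ⟨Set.univ, neg8, imp8, box8Km⟩

/-- The □-multioperator of Dm: T ↦ {T+,C+,F+}, C∪F ↦ {T−,C−,F−}. -/
def boxDm (x : V8) : Set V8 :=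
  if x.ltr = Ltr.T then { z | z.sgn = true } ∩ domDm else { z | z.sgn = false } ∩ domDm

/-- The multialgebra underlying the Nmatrix for Dm. -/
def A_Dm : MAlg :=
  ⟨domDm, fun x => neg8 x ∩ domDm, fun x y => imp8 x y ∩ domDm, boxDm⟩

/-- The □-multioperator of Tm: T+ ↦ {T+,C+}, and C+, C−, F− ↦ {C−,F−}. -/
def boxTm (x : V8) : Set V8 :=
  if x = ⟨Ltr.T, true⟩ then ({⟨Ltr.T, true⟩, ⟨Ltr.C, true⟩} : Set V8)
  else ({⟨Ltr.C, false⟩, ⟨Ltr.F, false⟩} : Set V8)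

/-- The multialgebra underlying the Nmatrix for Tm. -/
def A_Tm : MAlg :=
  ⟨domTm, fun x => neg8 x ∩ domTm, fun x y => imp8 x y ∩ domTm, boxTm⟩

/- ## The four-valued Nmatrix for Tmd -/

/-- The four values T+, C+, C−, F−. -/
inductive V4 : Type
  | Tp | Cp | Cm | Fm
  deriving DecidableEq

/-- Designated values of the Tmd Nmatrix: T+ and C+. -/
def V4.desig (x : V4) : Prop := x = V4.Tp ∨ x = V4.Cp

/-- Negation: deterministic. -/
def neg4 : V4 → V4
  | .Tp => .Fm
  | .Cp => .Cm
  | .Cm => .Cp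
  | .Fm => .Tp

/-- Position in the chain F− < C− < C+ < T+. -/
def rank4 : V4 → Nat
  | .Fm => 0
  | .Cm => 1
  | .Cp => 2
  | .Tp => 3

def ofRank4 : Nat → V4
  | 0 => .Fm
  | 1 => .Cm
  | 2 => .Cp
  | _ => .Tp

/-- The deterministic implication of Tmd: x→y is the maximum of ¬x and y in the chain. -/
def imp4 (x y : V4) : V4 := ofRank4 (max (rank4 (neg4 x)) (rank4 y))

/-- The □-multioperator of Tmd: T+ ↦ {T+,C+}; C+, C−, F− ↦ {C−,F−}. -/
def box4 (x : V4) : Set V4 :=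
  if x = V4.Tp then ({V4.Tp, V4.Cp} : Set V4) else ({V4.Cm, V4.Fm} : Set V4)

/-- A valuation over the Nmatrix for Tmd. -/
def IsVal4 (v : Form → V4) : Prop :=
  (∀ α, v (Form.neg α) = neg4 (v α)) ∧
  (∀ α β, v (Form.imp α β) = imp4 (v α) (v β)) ∧
  (∀ α, v (Form.box α) ∈ box4 (v α))

/-- Semantic consequence over the Nmatrix for Tmd. -/
def TmdEntails (Γ : Set Form) (φ : Form) : Prop :=
  ∀ v : Form → V4, IsVal4 v → (∀ γ ∈ Γ, (v γ).desig) → (v φ).desig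

/- ## Deterministic logical matrices -/

/-- A deterministic logical matrix over the signature {¬,→,□}. -/
structure DetMatrix where
  carrier : Type
  negOp : carrier → carrier
  impOp : carrier → carrier → carrier
  boxOp : carrier → carrier
  desig : Set carrier

/-- A valuation (homomorphism) over a deterministic matrix. -/
def DetMatrix.IsVal (Mat : DetMatrix) (h : Form → Mat.carrier) : Prop :=
  (∀ α, h (Form.neg α) = Mat.negOp (h α)) ∧
  (∀ α β, h (Form.imp α β) = Mat.impOp (h α) (h β)) ∧
  (∀ α, h (Form.box α) = Mat.boxOp (h α))

/-- Semantic consequence over a deterministic matrix. -/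
def DetMatrix.Entails (Mat : DetMatrix) (Γ : Set Form) (φ : Form) : Prop :=
  ∀ h : Form → Mat.carrier, Mat.IsVal h → (∀ γ ∈ Γ, h γ ∈ Mat.desig) → h φ ∈ Mat.desig

/-- Validity in a deterministic matrix. -/
def DetMatrix.Valid (Mat : DetMatrix) (φ : Form) : Prop :=
  ∀ h : Form → Mat.carrier, Mat.IsVal h → h φ ∈ Mat.desig

/- ## The Dugundji formulas δ(m) -/

/-- Left-associated disjunction of a nonempty list of formulas. -/
def bigOr : List Form → Form
  | [] => Form.var 0
  | a :: l => l.foldl Form.disj a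

/-- α(m): the left-associated disjunction of the variables p_1, …, p_m. -/
def alphaF (m : Nat) : Form := bigOr ((List.range m).map Form.var)

/-- β_i(m): the left-associated disjunction of p_1, …, p_m with p_i omitted. -/
def betaF (m i : Nat) : Form :=
  bigOr (((List.range m).filter (fun j => j != i)).map Form.var)

/-- δ(m): the left-associated disjunction of the formulas □α(m)→□β_i(m), 1 ≤ i ≤ m. -/
def deltaF (m : Nat) : Form :=
  bigOr ((List.range m).map (fun i => (Form.box (alphaF m)).imp (Form.box (betaF m i))))


/- ## Auxiliary development -/

namespace K45proof

open Form

abbrev Ax := K45mAx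

/-! ### Tautology helpers -/

lemma taut_id (φ : Form) : Taut (φ.imp φ) := by
  intro w hn hi; simp only [hi]; cases w φ <;> rfl

lemma taut_k (χ φ : Form) : Taut (χ.imp (φ.imp χ)) := by
  intro w hn hi; simp only [hi]; cases w φ <;> cases w χ <;> rfl

lemma taut_s (φ χ ψ : Form) :
    Taut ((φ.imp (χ.imp ψ)).imp ((φ.imp χ).imp (φ.imp ψ))) := by
  intro w hn hi; simp only [hi]; cases w φ <;> cases w χ <;> cases w ψ <;> rfl

lemma taut_exfalso (φ ψ : Form) : Taut (φ.imp ((Form.neg φ).imp ψ)) := by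
  intro w hn hi; simp only [hi, hn]; cases w φ <;> cases w ψ <;> rfl

lemma taut_cases (φ ψ : Form) :
    Taut ((φ.imp ψ).imp (((Form.neg φ).imp ψ).imp ψ)) := by
  intro w hn hi; simp only [hi, hn]; cases w φ <;> cases w ψ <;> rfl

lemma taut_negimp (φ ψ : Form) : Taut ((Form.neg φ).imp (φ.imp ψ)) := by
  intro w hn hi; simp only [hi, hn]; cases w φ <;> cases w ψ <;> rfl

/-! ### Basic derivability facts -/

lemma dmono {Γ Δ : Set Form} (hs : Γ ⊆ Δ) {φ : Form} (h : Deriv Ax Γ φ) :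
    Deriv Ax Δ φ := by
  induction h with
  | prem h => exact .prem (hs h)
  | ax h => exact .ax h
  | mp _ _ ih1 ih2 => exact .mp ih1 ih2

lemma dd {Γ : Set Form} {φ ψ : Form} (h : Deriv Ax (insert φ Γ) ψ) :
    Deriv Ax Γ (φ.imp ψ) := by
  induction h with
  | @prem χ h =>
    rcases Set.mem_insert_iff.mp h with h | h
    · subst h; exact .ax (.km (.pc (taut_id _)))
    · exact .mp (.ax (.km (.pc (taut_k χ φ)))) (.prem h)
  | @ax χ h => exact .mp (.ax (.km (.pc (taut_k χ φ)))) (.ax h)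
  | @mp χ ψ' _ _ ih1 ih2 =>
    exact .mp (.mp (.ax (.km (.pc (taut_s φ χ ψ')))) ih1) ih2

lemma dcut {Γ : Set Form} {φ ψ : Form} (h1 : Deriv Ax Γ φ)
    (h2 : Deriv Ax (insert φ Γ) ψ) : Deriv Ax Γ ψ := .mp (dd h2) h1

lemma dchain {c : Set (Set Form)} (hc : IsChain (· ⊆ ·) c) (hne : c.Nonempty)
    {φ : Form} (h : Deriv Ax (⋃₀ c) φ) : ∃ Δ ∈ c, Deriv Ax Δ φ := by
  induction h with
  | prem h => obtain ⟨Δ, hΔ, hm⟩ := h; exact ⟨Δ, hΔ, .prem hm⟩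
  | ax h => obtain ⟨Δ, hΔ⟩ := hne; exact ⟨Δ, hΔ, .ax h⟩
  | mp _ _ ih1 ih2 =>
    obtain ⟨Δ1, h1, d1⟩ := ih1; obtain ⟨Δ2, h2, d2⟩ := ih2
    rcases hc.total h1 h2 with hsub | hsub
    · exact ⟨Δ2, h2, .mp (dmono hsub d1) d2⟩
    · exact ⟨Δ1, h1, .mp d1 (dmono hsub d2)⟩

lemma lindenbaum {Γ : Set Form} {α : Form} (h : ¬ Deriv Ax Γ α) :
    ∃ Δ : Set Form, Γ ⊆ Δ ∧ ¬ Deriv Ax Δ α ∧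
      ∀ φ, φ ∉ Δ → Deriv Ax (insert φ Δ) α := by
  obtain ⟨Δ, hsub, hmem, hmax⟩ :=
    zorn_subset_nonempty {S : Set Form | ¬ Deriv Ax S α}
      (fun c hcS hc hne => ⟨⋃₀ c, fun hder => by
        obtain ⟨D, hD, hd⟩ := dchain hc hne hder
        exact hcS hD hd, fun s hs => Set.subset_sUnion_of_mem hs⟩) Γ h
  refine ⟨Δ, hsub, hmem, fun φ hφ => by
    by_contra hnd
    have : insert φ Δ ⊆ Δ := hmax hnd (Set.subset_insert φ Δ)
    exact hφ (this (Set.mem_insert φ Δ))⟩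

/-! ### Properties of relatively maximal sets -/

section MaxSet

variable {Δ : Set Form} {α₀ : Form}
variable (hnd : ¬ Deriv Ax Δ α₀)
variable (hm : ∀ φ, φ ∉ Δ → Deriv Ax (insert φ Δ) α₀)

include hnd hm

lemma cl {φ : Form} (h : Deriv Ax Δ φ) : φ ∈ Δ := by
  by_contra hn
  exact hnd (dcut h (hm φ hn))

lemma mem_ax {φ : Form} (h : KmAx φ) : φ ∈ Δ :=
  cl hnd hm (.ax (.km h))

lemma neg_mem {φ : Form} : Form.neg φ ∈ Δ ↔ φ ∉ Δ := by
  constructor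
  · intro h1 h2
    exact hnd (.mp (.mp (.ax (.km (.pc (taut_exfalso φ α₀)))) (.prem h2)) (.prem h1))
  · intro h1
    by_contra h2
    have d1 : Deriv Ax Δ (φ.imp α₀) := dd (hm φ h1)
    have d2 : Deriv Ax Δ ((Form.neg φ).imp α₀) := dd (hm _ h2)
    exact hnd (.mp (.mp (.ax (.km (.pc (taut_cases φ α₀)))) d1) d2)

lemma imp_mem {φ ψ : Form} : Form.imp φ ψ ∈ Δ ↔ (φ ∈ Δ → ψ ∈ Δ) := by
  constructor
  · intro h1 h2
    exact cl hnd hm (.mp (.prem h1) (.prem h2))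
  · intro h1
    by_cases h2 : φ ∈ Δ
    · exact cl hnd hm (.mp (.ax (.km (.pc (taut_k ψ φ)))) (.prem (h1 h2)))
    · have h3 : Form.neg φ ∈ Δ := (neg_mem hnd hm).mpr h2
      exact cl hnd hm (.mp (.ax (.km (.pc (taut_negimp φ ψ)))) (.prem h3))

lemma conj_mem {φ ψ : Form} : Form.conj φ ψ ∈ Δ ↔ (φ ∈ Δ ∧ ψ ∈ Δ) := by
  unfold Form.conj
  rw [neg_mem hnd hm, imp_mem hnd hm, neg_mem hnd hm]
  tauto

lemma disj_mem {φ ψ : Form} : Form.disj φ ψ ∈ Δ ↔ (φ ∈ Δ ∨ ψ ∈ Δ) := by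
  unfold Form.disj
  rw [imp_mem hnd hm, neg_mem hnd hm]
  tauto

lemma dn_mem {φ : Form} : Form.box (Form.neg (Form.neg φ)) ∈ Δ ↔ Form.box φ ∈ Δ := by
  constructor
  · intro h
    exact cl hnd hm (.mp (.ax (.km (.dn2 φ))) (.prem h))
  · intro h
    exact cl hnd hm (.mp (.ax (.km (.dn1 φ))) (.prem h))

lemma dia_mem {φ : Form} : Form.dia φ ∈ Δ ↔ Form.box (Form.neg φ) ∉ Δ := by
  unfold Form.dia
  rw [neg_mem hnd hm]

lemma dia_neg_mem {φ : Form} : Form.dia (Form.neg φ) ∈ Δ ↔ Form.box φ ∉ Δ := by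
  rw [dia_mem hnd hm, dn_mem hnd hm]

end MaxSet

/-! ### Boolean combinatorial core -/

/-- Boolean characteristic function of `limp`. -/
def limpB : Ltr → Ltr → Ltr → Bool
  | .I, _, z => z == .I
  | .T, .I, z => z == .I
  | .C, .I, z => z == .I
  | .F, .I, z => z == .I
  | .T, .T, z => z == .T
  | .T, .C, z => z == .C
  | .T, .F, z => z == .F
  | .C, .T, z => z == .T
  | .C, .C, z => z == .T || z == .C
  | .C, .F, z => z == .C
  | .F, .T, z => z == .T
  | .F, .C, z => z == .T
  | .F, .F, z => z == .T

lemma mem_limp_iff (x y z : Ltr) : z ∈ limp x y ↔ limpB x y z = true := by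
  cases x <;> cases y <;> cases z <;> simp [limp, limpB]

/-- Letter determined by the pair (□φ ∈ Δ, □¬φ ∈ Δ). -/
def ltrB (x y : Bool) : Ltr :=
  if x then (if y then .I else .T) else (if y then .F else .C)

set_option synthInstance.maxSize 1000 in
set_option maxHeartbeats 1000000 in
lemma key : ∀ a a' b b' g g' : Bool,
    (a' = false → g = true → a = true → b = true) →
    (b = false → g = true → a' = false → b' = false) →
    (a' = false → g' = false → a = true → b' = false) →
    (a' = true → g = true) →
    (b = true → g = true) →
    ((a' = false ∨ a = false) → b' = false → g' = false) →
    (b = false → a = false → g' = false) →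
    (a = true → a' = true → g = true ∧ g' = true) →
    (b = true → b' = true → g = true ∧ g' = true) →
    limpB (ltrB a a') (ltrB b b') (ltrB g g') = true := by decide

/-! ### The canonical valuation -/

open Classical in
/-- Canonical letter of a formula, given a relatively maximal set `Δ`. -/
noncomputable def canL (Δ : Set Form) (φ : Form) : Ltr :=
  ltrB (decide (Form.box φ ∈ Δ)) (decide (Form.box (Form.neg φ) ∈ Δ))

open Classical in
/-- Canonical valuation. -/
noncomputable def canV (Δ : Set Form) (φ : Form) : V8 :=
  ⟨canL Δ φ, decide (φ ∈ Δ)⟩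

section Canon

variable {Δ : Set Form} {α₀ : Form}
variable (hnd : ¬ Deriv Ax Δ α₀)
variable (hm : ∀ φ, φ ∉ Δ → Deriv Ax (insert φ Δ) α₀)

include hnd hm

open Classical

lemma canV_neg (φ : Form) : canV Δ (Form.neg φ) ∈ neg8 (canV Δ φ) := by
  have hs : Form.neg φ ∈ Δ ↔ φ ∉ Δ := neg_mem hnd hm
  have hdn : Form.box (Form.neg (Form.neg φ)) ∈ Δ ↔ Form.box φ ∈ Δ := dn_mem hnd hm
  show canV Δ (Form.neg φ) ∈ ({⟨lneg (canV Δ φ).ltr, !(canV Δ φ).sgn⟩} : Set V8)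
  simp only [Set.mem_singleton_iff, canV, V8.mk.injEq]
  constructor
  · unfold canL
    by_cases h1 : Form.box φ ∈ Δ <;> by_cases h2 : Form.box (Form.neg φ) ∈ Δ <;>
      simp [h1, h2, hdn, ltrB, lneg]
  · by_cases h : φ ∈ Δ <;> simp [h, hs]

lemma canV_imp (φ ψ : Form) : canV Δ (Form.imp φ ψ) ∈ imp8 (canV Δ φ) (canV Δ ψ) := by
  have hsgn : Form.imp φ ψ ∈ Δ ↔ (φ ∈ Δ → ψ ∈ Δ) := imp_mem hnd hm
  constructor
  · -- letter
    show canL Δ (φ.imp ψ) ∈ limp (canL Δ φ) (canL Δ ψ)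
    rw [mem_limp_iff]
    unfold canL
    apply key
    · -- K'
      have h := mem_ax hnd hm (KmAx.k' φ ψ)
      rw [axK', axK, imp_mem hnd hm, dia_mem hnd hm, imp_mem hnd hm,
        imp_mem hnd hm] at h
      simpa using h
    · -- K1'
      have h := mem_ax hnd hm (KmAx.k1' φ ψ)
      rw [axK1', axK1, imp_mem hnd hm, dia_neg_mem hnd hm, imp_mem hnd hm,
        imp_mem hnd hm, dia_mem hnd hm, dia_mem hnd hm] at h
      simpa using h
    · -- K2'
      have h := mem_ax hnd hm (KmAx.k2' φ ψ)
      rw [axK2', axK2, imp_mem hnd hm, dia_mem hnd hm, imp_mem hnd hm,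
        imp_mem hnd hm, dia_mem hnd hm, dia_mem hnd hm] at h
      simpa using h
    · -- M1
      have h := mem_ax hnd hm (KmAx.m1 φ ψ)
      rw [axM1, imp_mem hnd hm, neg_mem hnd hm, dia_mem hnd hm] at h
      simp only [decide_eq_true_eq]
      exact fun h1 => h (fun h2 => h2 h1)
    · -- M2
      have h := mem_ax hnd hm (KmAx.m2 φ ψ)
      rw [axM2, imp_mem hnd hm] at h
      simpa using h
    · -- M3'
      have h := mem_ax hnd hm (KmAx.m3' φ ψ)
      rw [axM3', axM3, imp_mem hnd hm, disj_mem hnd hm, dia_mem hnd hm,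
        dia_neg_mem hnd hm, imp_mem hnd hm, dia_mem hnd hm, dia_mem hnd hm] at h
      simpa using h
    · -- M4'
      have h := mem_ax hnd hm (KmAx.m4' φ ψ)
      rw [axM4', axM4, imp_mem hnd hm, dia_neg_mem hnd hm, imp_mem hnd hm,
        dia_neg_mem hnd hm, dia_mem hnd hm] at h
      simpa using h
    · -- I1
      have h := mem_ax hnd hm (KmAx.i1 φ ψ)
      rw [axI1, imp_mem hnd hm, conj_mem hnd hm, conj_mem hnd hm] at h
      simp only [decide_eq_true_eq]
      exact fun h1 h2 => h ⟨h1, h2⟩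
    · -- I2
      have h := mem_ax hnd hm (KmAx.i2 φ ψ)
      rw [axI2, imp_mem hnd hm, conj_mem hnd hm, conj_mem hnd hm] at h
      simp only [decide_eq_true_eq]
      exact fun h1 h2 => h ⟨h1, h2⟩
  · -- sign
    show (canV Δ (φ.imp ψ)).sgn = (!(canV Δ φ).sgn || (canV Δ ψ).sgn)
    by_cases h1 : φ ∈ Δ <;> by_cases h2 : ψ ∈ Δ <;>
      simp [canV, h1, h2, hsgn]

lemma canV_box (φ : Form) : canV Δ (Form.box φ) ∈ box8K45m (canV Δ φ) := by
  have h4 : Form.box φ ∈ Δ → Form.box (Form.box φ) ∈ Δ := fun h =>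
    cl hnd hm (.mp (.ax (K45mAx.four φ)) (.prem h))
  have h5 : Form.box φ ∉ Δ → Form.box (Form.neg (Form.box φ)) ∈ Δ := by
    intro h
    have hax : Form.dia (Form.box φ) ∈ Δ → Form.box φ ∈ Δ := by
      have h' := cl hnd hm (.ax (K45mAx.five φ))
      rw [ax5, imp_mem hnd hm] at h'
      exact h'
    by_contra h2
    exact h (hax ((dia_mem hnd hm).mpr h2))
  unfold box8K45m canV
  by_cases hA : Form.box φ ∈ Δ
  · have hl : canL Δ φ = Ltr.T ∨ canL Δ φ = Ltr.I := by
      unfold canL; by_cases h2 : Form.box (Form.neg φ) ∈ Δ <;> simp [hA, h2, ltrB]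
    rw [if_pos hl]
    have hBB := h4 hA
    unfold canL
    by_cases h2 : Form.box (Form.neg (Form.box φ)) ∈ Δ <;> simp [hBB, h2, hA, ltrB]
  · have hl : ¬ (canL Δ φ = Ltr.T ∨ canL Δ φ = Ltr.I) := by
      unfold canL; by_cases h2 : Form.box (Form.neg φ) ∈ Δ <;> simp [hA, h2, ltrB]
    rw [if_neg hl]
    have hN := h5 hA
    unfold canL
    by_cases h2 : Form.box (Form.box φ) ∈ Δ <;> simp [hN, h2, hA, ltrB]

lemma canV_isVal : IsVal8 box8K45m (canV Δ) :=
  ⟨canV_neg hnd hm, canV_imp hnd hm, canV_box hnd hm⟩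

end Canon

open Classical in
lemma canV_desig_iff (Δ : Set Form) (φ : Form) : (canV Δ φ).desig ↔ φ ∈ Δ := by
  show decide (φ ∈ Δ) = true ↔ φ ∈ Δ
  exact ⟨of_decide_eq_true, decide_eq_true⟩

/-! ### Soundness -/

instance : Fintype Ltr :=
  ⟨⟨↑[Ltr.T, Ltr.C, Ltr.F, Ltr.I], by decide⟩, fun x => by cases x <;> decide⟩

/-- Sign of □φ as a function of the letter of φ. -/
def bS : Ltr → Bool
  | .T => true
  | .I => true
  | .C => false
  | .F => false

section Sound

variable {v : Form → V8}

lemma veq_neg (hv : IsVal8 box8K45m v) (φ : Form) :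
    v (Form.neg φ) = ⟨lneg (v φ).ltr, !(v φ).sgn⟩ := hv.1 φ

lemma sgn_neg (hv : IsVal8 box8K45m v) (φ : Form) :
    (v (Form.neg φ)).sgn = !(v φ).sgn := by rw [veq_neg hv]

lemma ltr_neg (hv : IsVal8 box8K45m v) (φ : Form) :
    (v (Form.neg φ)).ltr = lneg (v φ).ltr := by rw [veq_neg hv]

lemma sgn_imp (hv : IsVal8 box8K45m v) (φ ψ : Form) :
    (v (Form.imp φ ψ)).sgn = (!(v φ).sgn || (v ψ).sgn) := (hv.2.1 φ ψ).2

lemma ltr_imp (hv : IsVal8 box8K45m v) (φ ψ : Form) :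
    (v (Form.imp φ ψ)).ltr ∈ limp (v φ).ltr (v ψ).ltr := (hv.2.1 φ ψ).1

lemma box_cases (hv : IsVal8 box8K45m v) (φ : Form) :
    v (Form.box φ) = ⟨.T, true⟩ ∨ v (Form.box φ) = ⟨.I, true⟩ ∨
      v (Form.box φ) = ⟨.F, false⟩ ∨ v (Form.box φ) = ⟨.I, false⟩ := by
  have h := hv.2.2 φ
  unfold box8K45m at h
  split at h <;> simp only [Set.mem_insert_iff, Set.mem_singleton_iff] at h <;> tauto

lemma sgn_box (hv : IsVal8 box8K45m v) (φ : Form) :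
    (v (Form.box φ)).sgn = bS (v φ).ltr := by
  have h := hv.2.2 φ
  unfold box8K45m at h
  by_cases hc : (v φ).ltr = Ltr.T ∨ (v φ).ltr = Ltr.I
  · rw [if_pos hc] at h
    simp only [Set.mem_insert_iff, Set.mem_singleton_iff] at h
    rcases hc with hc | hc <;> rw [hc] <;> rcases h with h | h <;> rw [h] <;> rfl
  · rw [if_neg hc] at h
    simp only [Set.mem_insert_iff, Set.mem_singleton_iff] at h
    have hc' : (v φ).ltr = Ltr.C ∨ (v φ).ltr = Ltr.F := by
      rcases hl : (v φ).ltr <;> simp [hl] at hc ⊢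
    rcases hc' with hc' | hc' <;> rw [hc'] <;> rcases h with h | h <;> rw [h] <;> rfl

lemma sound_km (hv : IsVal8 box8K45m v) {φ : Form} (h : KmAx φ) : (v φ).desig := by
  cases h with
  | pc h =>
    exact h (fun χ => (v χ).sgn) (fun χ => sgn_neg hv χ) (fun χ ψ => sgn_imp hv χ ψ)
  | k' α β =>
    show (v _).sgn = true
    simp only [axK', axK, Form.dia, sgn_imp hv, sgn_neg hv, sgn_box hv, ltr_neg hv]
    have hab := (mem_limp_iff _ _ _).mp (ltr_imp hv α β)
    revert hab
    generalize (v (Form.imp α β)).ltr = lc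
    generalize (v β).ltr = lb
    generalize (v α).ltr = la
    revert la lb lc; decide
  | k1' α β =>
    show (v _).sgn = true
    simp only [axK1', axK1, Form.dia, sgn_imp hv, sgn_neg hv, sgn_box hv, ltr_neg hv]
    have hab := (mem_limp_iff _ _ _).mp (ltr_imp hv α β)
    revert hab
    generalize (v (Form.imp α β)).ltr = lc
    generalize (v β).ltr = lb
    generalize (v α).ltr = la
    revert la lb lc; decide
  | k2' α β =>
    show (v _).sgn = true
    simp only [axK2', axK2, Form.dia, sgn_imp hv, sgn_neg hv, sgn_box hv, ltr_neg hv]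
    have hab := (mem_limp_iff _ _ _).mp (ltr_imp hv α β)
    revert hab
    generalize (v (Form.imp α β)).ltr = lc
    generalize (v β).ltr = lb
    generalize (v α).ltr = la
    revert la lb lc; decide
  | m1 α β =>
    show (v _).sgn = true
    simp only [axM1, Form.dia, sgn_imp hv, sgn_neg hv, sgn_box hv, ltr_neg hv]
    have hab := (mem_limp_iff _ _ _).mp (ltr_imp hv α β)
    revert hab
    generalize (v (Form.imp α β)).ltr = lc
    generalize (v β).ltr = lb
    generalize (v α).ltr = la
    revert la lb lc; decide
  | m2 α β =>
    show (v _).sgn = true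
    simp only [axM2, Form.dia, sgn_imp hv, sgn_neg hv, sgn_box hv, ltr_neg hv]
    have hab := (mem_limp_iff _ _ _).mp (ltr_imp hv α β)
    revert hab
    generalize (v (Form.imp α β)).ltr = lc
    generalize (v β).ltr = lb
    generalize (v α).ltr = la
    revert la lb lc; decide
  | m3' α β =>
    show (v _).sgn = true
    simp only [axM3', axM3, Form.dia, Form.disj, sgn_imp hv, sgn_neg hv, sgn_box hv,
      ltr_neg hv]
    have hab := (mem_limp_iff _ _ _).mp (ltr_imp hv α β)
    revert hab
    generalize (v (Form.imp α β)).ltr = lc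
    generalize (v β).ltr = lb
    generalize (v α).ltr = la
    revert la lb lc; decide
  | m4' α β =>
    show (v _).sgn = true
    simp only [axM4', axM4, Form.dia, sgn_imp hv, sgn_neg hv, sgn_box hv, ltr_neg hv]
    have hab := (mem_limp_iff _ _ _).mp (ltr_imp hv α β)
    revert hab
    generalize (v (Form.imp α β)).ltr = lc
    generalize (v β).ltr = lb
    generalize (v α).ltr = la
    revert la lb lc; decide
  | i1 α β =>
    show (v _).sgn = true
    simp only [axI1, Form.dia, Form.conj, sgn_imp hv, sgn_neg hv, sgn_box hv, ltr_neg hv]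
    have hab := (mem_limp_iff _ _ _).mp (ltr_imp hv α β)
    revert hab
    generalize (v (Form.imp α β)).ltr = lc
    generalize (v β).ltr = lb
    generalize (v α).ltr = la
    revert la lb lc; decide
  | i2 α β =>
    show (v _).sgn = true
    simp only [axI2, Form.dia, Form.conj, sgn_imp hv, sgn_neg hv, sgn_box hv, ltr_neg hv]
    have hab := (mem_limp_iff _ _ _).mp (ltr_imp hv α β)
    revert hab
    generalize (v (Form.imp α β)).ltr = lc
    generalize (v β).ltr = lb
    generalize (v α).ltr = la
    revert la lb lc; decide
  | dn1 α =>
    show (v _).sgn = true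
    simp only [axDN1, sgn_imp hv, sgn_neg hv, sgn_box hv, ltr_neg hv]
    generalize (v α).ltr = la
    revert la; decide
  | dn2 α =>
    show (v _).sgn = true
    simp only [axDN2, sgn_imp hv, sgn_neg hv, sgn_box hv, ltr_neg hv]
    generalize (v α).ltr = la
    revert la; decide

lemma sound_ax (hv : IsVal8 box8K45m v) {φ : Form} (h : K45mAx φ) : (v φ).desig := by
  cases h with
  | km h => exact sound_km hv h
  | four α =>
    show (v _).sgn = true
    simp only [ax4, sgn_imp hv]
    rw [sgn_box hv (Form.box α)]
    rcases box_cases hv α with h | h | h | h <;> rw [h] <;> rfl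
  | five α =>
    show (v _).sgn = true
    simp only [ax5, Form.dia, sgn_imp hv, sgn_neg hv]
    rw [sgn_box hv (Form.neg (Form.box α)), ltr_neg hv]
    rcases box_cases hv α with h | h | h | h <;> rw [h] <;> rfl

lemma soundness {Γ : Set Form} {φ : Form} (h : Deriv Ax Γ φ) :
    NmEntails box8K45m Γ φ := by
  intro v hv hΓ
  induction h with
  | prem h => exact hΓ _ h
  | ax h => exact sound_ax hv h
  | mp _ _ ih1 ih2 =>
    have h1 : (v _).sgn = true := ih1
    rw [sgn_imp hv] at h1
    have h2 : (v _).sgn = true := ih2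
    show (v _).sgn = true
    rw [h2] at h1
    simpa using h1

end Sound

end K45proof

/-- Soundness and completeness of K45m with respect to its eight-valued Nmatrix. -/
theorem K45m_sound_complete (Γ : Set Form) (α : Form) :
    Deriv K45mAx Γ α ↔ NmEntails box8K45m Γ α := by
  constructor
  · exact K45proof.soundness
  · intro hE
    by_contra hnd
    obtain ⟨Δ, hsub, hnd', hm⟩ := K45proof.lindenbaum hnd
    have hval := K45proof.canV_isVal hnd' hm
    have hdes : ∀ γ ∈ Γ, (K45proof.canV Δ γ).desig := fun γ hγ =>
      (K45proof.canV_desig_iff Δ γ).mpr (hsub hγ)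
    have hα : α ∈ Δ := (K45proof.canV_desig_iff Δ α).mp (hE _ hval hdes)
    exact hnd' (.prem hα)
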